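/- Let f : (a,b) → ℝ be positive and twice differentiable satisfying f·f'' = (7/4)(f')² − f⁴, and define κ₂ := √(9(f')²/(16f²) + 9f²/4). Then (f/κ₂)' − (1/4)(f'/κ₂) = 0. -/

import Mathlib

/-- If f > 0 satisfies f·f'' = (7/4)(f')² − f⁴ and κ₂ := √(9(f')²/(16f²) + 9f²/4),
then (f/κ₂)' − (1/4)(f'/κ₂) = 0. -/
theorem stmt_10 (a b : ℝ) (f : ℝ → ℝ)
    (hpos : ∀ u ∈ Set.Ioo a b, 0 < f u)
    (hdiff : ∀ u ∈ Set.Ioo a b, DifferentiableAt ℝ f u ∧ DifferentiableAt ℝ (deriv f) u)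
    (hode : ∀ u ∈ Set.Ioo a b,
      f u * deriv (deriv f) u = (7 / 4) * (deriv f u) ^ 2 - (f u) ^ 4) :
    ∀ u ∈ Set.Ioo a b,
      deriv (fun x => f x / Real.sqrt (9 * (deriv f x) ^ 2 / (16 * (f x) ^ 2) +
          9 * (f x) ^ 2 / 4)) u -
        (1 / 4) * (deriv f u / Real.sqrt (9 * (deriv f u) ^ 2 / (16 * (f u) ^ 2) +
          9 * (f u) ^ 2 / 4)) = 0 := by
  intro u hu
  have hF : 0 < f u := hpos u hu
  have h1 : HasDerivAt f (deriv f u) u := (hdiff u hu).1.hasDerivAt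
  have h2 : HasDerivAt (deriv f) (deriv (deriv f) u) u := (hdiff u hu).2.hasDerivAt
  have hodeu := hode u hu
  have hF0 : f u ≠ 0 := ne_of_gt hF
  have hgpos : 0 < 9 * (deriv f u)^2 / (16 * (f u)^2) + 9 * (f u)^2 / 4 := by positivity
  have hg : HasDerivAt (fun x => 9 * (deriv f x)^2 / (16 * (f x)^2) + 9 * (f x)^2 / 4)
      ((9 * (2 * deriv f u ^ 1 * deriv (deriv f) u) * (16 * (f u)^2)
        - 9 * (deriv f u)^2 * (16 * (2 * f u ^ 1 * deriv f u))) / (16 * (f u)^2)^2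
        + 9 * (2 * f u ^ 1 * deriv f u) / 4) u :=
    (((h2.pow 2).const_mul 9).div ((h1.pow 2).const_mul 16)
      (mul_ne_zero (by norm_num) (pow_ne_zero 2 hF0))).add (((h1.pow 2).const_mul 9).div_const 4)
  have hκ := hg.sqrt (ne_of_gt hgpos)
  have hs0 : Real.sqrt (9 * (deriv f u)^2 / (16 * (f u)^2) + 9 * (f u)^2 / 4) ≠ 0 :=
    Real.sqrt_ne_zero'.mpr hgpos
  have hq := h1.div hκ hs0
  rw [show deriv (fun x => f x / Real.sqrt (9 * (deriv f x)^2 / (16 * (f x)^2) + 9 * (f x)^2 / 4)) u = _ from hq.deriv]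
  set s := Real.sqrt (9 * (deriv f u)^2 / (16 * (f u)^2) + 9 * (f u)^2 / 4) with hs
  have hs2 : s^2 = 9 * (deriv f u)^2 / (16 * (f u)^2) + 9 * (f u)^2 / 4 :=
    Real.sq_sqrt hgpos.le
  have hE : deriv (deriv f) u = ((7/4) * (deriv f u)^2 - (f u)^4) / (f u) := by
    field_simp at hodeu ⊢; linarith
  rw [hE]
  set F := f u; set D := deriv f u
  have hs2' : 16 * F^2 * s^2 = 9 * D^2 + 36 * F^4 := by
    rw [hs2]; field_simp; ring
  field_simp
  linear_combination (3 * D) * hs2'
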